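/- Monotonicity of the activated random walk graphical construction: suppose (X',F') ⪯ (X,F), i.e. X' is obtained from X by deleting some particles and changing the types of some remaining particles from B (active) to A (passive), and F' is obtained from F by inserting sleep instructions. If for some label sequence N ∈ 𝒩_m the sequence N·X under F stabilizes, then for every label sequence N' ∈ 𝒩_{m'} (m' = number of particles of X') the sequence N'·X' under F' also stabilizes, and for every site z ∈ ℤ the number of jump instructions of F' opened at z along the primed evolution is at most the number of jump instructions of F opened at z along the unprimed evolution, i.e. R'_z ≤ R_z. -/

import Mathlib

/-- A state of the activated random walk graphical construction with `m` particles on `ℤ`: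
positions, types (`true` = B = active, `false` = A = passive) and envelope counters. -/
structure ARWState (m : ℕ) where
  pos : Fin m → ℤ
  typ : Fin m → Bool
  cnt : ℤ → ℕ

/-- An envelope configuration takes values in `{-1, 0, 1}`:
`±1` is a jump instruction, `0` a sleep instruction. -/
def ValidEnvelopes (F : ℤ → ℕ → ℤ) : Prop :=
  ∀ z j, F z j = -1 ∨ F z j = 0 ∨ F z j = 1

/-- The action `n · X` of a label `n` on a state `X`. -/
def arwStep {m : ℕ} (F : ℤ → ℕ → ℤ) (n : Fin m) (X : ARWState m) : ARWState m :=
  if X.typ n = false then X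
  else
    let z := X.pos n
    let instr := F z (X.cnt z)
    let cnt' : ℤ → ℕ := fun w => if w = z then X.cnt w + 1 else X.cnt w
    if instr = 0 then
      { pos := X.pos
        typ := fun k =>
          if k = n then (if ∃ l, l ≠ n ∧ X.pos l = z then true else false) else X.typ k
        cnt := cnt' }
    else
      let pos' : Fin m → ℤ := fun k => if k = n then z + instr else X.pos k
      { pos := pos'
        typ := fun k => if pos' k = z + instr then true else X.typ k
        cnt := cnt' }

/-- The evolution `N · X`: `X₀ = X`, `X_{k+1} = n_{k+1} · X_k`. -/
def arwEvolve {m : ℕ} (F : ℤ → ℕ → ℤ) (N : ℕ → Fin m) (X : ARWState m) : ℕ → ARWState m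
  | 0 => X
  | k + 1 => arwStep F (N k) (arwEvolve F N X k)

/-- `N · X` stabilizes at `X'`: eventually the sequence is constantly `X'`,
and every particle of `X'` is passive. -/
def StabilizesAt {m : ℕ} (F : ℤ → ℕ → ℤ) (N : ℕ → Fin m) (X X' : ARWState m) : Prop :=
  (∃ k₀, ∀ k, k₀ ≤ k → arwEvolve F N X k = X') ∧ ∀ n, X'.typ n = false

/-- `𝒩_m`: label sequences in which every label occurs infinitely often. -/
def FairSeq {m : ℕ} (N : ℕ → Fin m) : Prop :=
  ∀ n : Fin m, ∀ k : ℕ, ∃ k', k ≤ k' ∧ N k' = n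

/-- Number of jump instructions among the first `c` envelopes at site `z`. -/
def jumpCount (F : ℤ → ℕ → ℤ) (z : ℤ) (c : ℕ) : ℕ :=
  ((Finset.range c).filter (fun j => F z j ≠ 0)).card


structure UConf : Type where
  a : ℤ → ℕ
  u : ℤ → ℕ
  c : ℤ → ℕ

theorem UConf.ext' {Y Z : UConf} (ha : ∀ w, Y.a w = Z.a w)
    (hu : ∀ w, Y.u w = Z.u w) (hc : ∀ w, Y.c w = Z.c w) : Y = Z := by
  cases Y; cases Z
  simp only [UConf.mk.injEq]
  exact ⟨funext ha, funext hu, funext hc⟩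

def utop (F : ℤ → ℕ → ℤ) (z : ℤ) (Y : UConf) : UConf :=
  if Y.a z = 0 then Y
  else if F z (Y.c z) = 0 then
    ⟨fun w => if w = z ∧ Y.u z = 1 then 0 else Y.a w, Y.u,
     fun w => if w = z then Y.c z + 1 else Y.c w⟩
  else
    ⟨fun w => if w = z + F z (Y.c z) then Y.u w + 1 else if w = z then Y.a z - 1 else Y.a w,
     fun w => if w = z + F z (Y.c z) then Y.u w + 1 else if w = z then Y.u z - 1 else Y.u w,
     fun w => if w = z then Y.c z + 1 else Y.c w⟩

def WF (Y : UConf) : Prop := ∀ z, Y.a z ≤ Y.u z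

lemma utop_passive {F : ℤ → ℕ → ℤ} {z : ℤ} {Y : UConf} (h : Y.a z = 0) : utop F z Y = Y := by
  simp [utop, h]

lemma utop_sleep {F : ℤ → ℕ → ℤ} {z : ℤ} {Y : UConf} (h : Y.a z ≠ 0) (h0 : F z (Y.c z) = 0) :
    utop F z Y = ⟨fun w => if w = z ∧ Y.u z = 1 then 0 else Y.a w, Y.u,
     fun w => if w = z then Y.c z + 1 else Y.c w⟩ := by
  simp [utop, h, h0]

lemma utop_jump {F : ℤ → ℕ → ℤ} {z : ℤ} {Y : UConf} (h : Y.a z ≠ 0) (h1 : F z (Y.c z) ≠ 0) :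
    utop F z Y =
    ⟨fun w => if w = z + F z (Y.c z) then Y.u w + 1 else if w = z then Y.a z - 1 else Y.a w,
     fun w => if w = z + F z (Y.c z) then Y.u w + 1 else if w = z then Y.u z - 1 else Y.u w,
     fun w => if w = z then Y.c z + 1 else Y.c w⟩ := by
  simp [utop, h, h1]

lemma utop_c_apply {F : ℤ → ℕ → ℤ} {z : ℤ} {Y : UConf} (h : Y.a z ≠ 0) (w : ℤ) :
    (utop F z Y).c w = if w = z then Y.c z + 1 else Y.c w := by
  by_cases h0 : F z (Y.c z) = 0
  · rw [utop_sleep h h0]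
  · rw [utop_jump h h0]

lemma utop_c_ne {F : ℤ → ℕ → ℤ} {z : ℤ} {Y : UConf} {w : ℤ} (h : w ≠ z) :
    (utop F z Y).c w = Y.c w := by
  by_cases ha : Y.a z = 0
  · rw [utop_passive ha]
  · rw [utop_c_apply ha, if_neg h]

lemma utop_wf {F : ℤ → ℕ → ℤ} {z : ℤ} {Y : UConf} (h : WF Y) : WF (utop F z Y) := by
  by_cases ha : Y.a z = 0
  · rwa [utop_passive ha]
  by_cases h0 : F z (Y.c z) = 0
  · rw [utop_sleep ha h0]
    intro w; dsimp only
    split <;> [omega; exact h w]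
  · rw [utop_jump ha h0]
    intro w; dsimp only
    split
    · omega
    · split
      · have := h z; omega
      · exact h w

lemma utop_a_mono {F : ℤ → ℕ → ℤ} {z : ℤ} {Y : UConf} {w : ℤ} (hwf : WF Y) (h : w ≠ z) :
    Y.a w ≤ (utop F z Y).a w := by
  by_cases ha : Y.a z = 0
  · rw [utop_passive ha]
  by_cases h0 : F z (Y.c z) = 0
  · rw [utop_sleep ha h0]; dsimp only
    rw [if_neg (by simp [h])]
  · rw [utop_jump ha h0]; dsimp only
    have := hwf w
    split <;> first | omega | (split <;> omega)

def applyW (F : ℤ → ℕ → ℤ) : List ℤ → UConf → UConf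
  | [], Y => Y
  | z :: w, Y => applyW F w (utop F z Y)

def LegalW (F : ℤ → ℕ → ℤ) : List ℤ → UConf → Prop
  | [], _ => True
  | z :: w, Y => Y.a z ≠ 0 ∧ LegalW F w (utop F z Y)

lemma applyW_append (F : ℤ → ℕ → ℤ) (w₁ w₂ : List ℤ) (Y : UConf) :
    applyW F (w₁ ++ w₂) Y = applyW F w₂ (applyW F w₁ Y) := by
  induction w₁ generalizing Y with
  | nil => rfl
  | cons z w ih => simp [applyW, ih]

lemma legalW_append {F : ℤ → ℕ → ℤ} {w₁ w₂ : List ℤ} {Y : UConf}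
    (h1 : LegalW F w₁ Y) (h2 : LegalW F w₂ (applyW F w₁ Y)) : LegalW F (w₁ ++ w₂) Y := by
  induction w₁ generalizing Y with
  | nil => exact h2
  | cons z w ih => exact ⟨h1.1, ih h1.2 h2⟩

lemma applyW_wf {F : ℤ → ℕ → ℤ} {w : List ℤ} {Y : UConf} (h : WF Y) : WF (applyW F w Y) := by
  induction w generalizing Y with
  | nil => exact h
  | cons z w ih => exact ih (utop_wf h)

lemma count_applyW {F : ℤ → ℕ → ℤ} {w : List ℤ} {Y : UConf} (h : LegalW F w Y) (s : ℤ) :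
    (applyW F w Y).c s = Y.c s + w.count s := by
  induction w generalizing Y with
  | nil => simp [applyW]
  | cons z w ih =>
      rw [applyW, ih h.2, utop_c_apply h.1, List.count_cons]
      by_cases hs : s = z <;> simp [hs] <;> omega

lemma a_mono_applyW {F : ℤ → ℕ → ℤ} {w : List ℤ} {Y : UConf} {z : ℤ}
    (hwf : WF Y) (hz : z ∉ w) : Y.a z ≤ (applyW F w Y).a z := by
  induction w generalizing Y with
  | nil => exact le_refl _
  | cons y w ih =>
      rw [applyW]
      have h1 : z ≠ y := fun h => hz (by simp [h])
      exact le_trans (utop_a_mono hwf h1) (ih (utop_wf hwf) (fun h => hz (by simp [h])))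

lemma utop_a_apply {F : ℤ → ℕ → ℤ} {z : ℤ} {Y : UConf} (h : Y.a z ≠ 0) (w : ℤ) :
    (utop F z Y).a w = if F z (Y.c z) = 0 then (if w = z ∧ Y.u z = 1 then 0 else Y.a w)
      else (if w = z + F z (Y.c z) then Y.u w + 1 else if w = z then Y.a z - 1 else Y.a w) := by
  by_cases h0 : F z (Y.c z) = 0
  · rw [utop_sleep h h0, if_pos h0]
  · rw [utop_jump h h0, if_neg h0]

lemma utop_u_apply {F : ℤ → ℕ → ℤ} {z : ℤ} {Y : UConf} (h : Y.a z ≠ 0) (w : ℤ) :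
    (utop F z Y).u w = if F z (Y.c z) = 0 then Y.u w
      else (if w = z + F z (Y.c z) then Y.u w + 1 else if w = z then Y.u z - 1 else Y.u w) := by
  by_cases h0 : F z (Y.c z) = 0
  · rw [utop_sleep h h0, if_pos h0]
  · rw [utop_jump h h0, if_neg h0]

set_option maxHeartbeats 1600000 in
lemma utop_comm {F : ℤ → ℕ → ℤ} {y z : ℤ} {Y : UConf} (hwf : WF Y) (hyz : y ≠ z)
    (hay : Y.a y ≠ 0) (haz : Y.a z ≠ 0) :
    utop F z (utop F y Y) = utop F y (utop F z Y) := by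
  have hcz : (utop F y Y).c z = Y.c z := utop_c_ne (Ne.symm hyz)
  have hcy : (utop F z Y).c y = Y.c y := utop_c_ne hyz
  have haz' : (utop F y Y).a z ≠ 0 := by
    have := utop_a_mono (F := F) (z := y) (w := z) hwf (Ne.symm hyz); omega
  have hay' : (utop F z Y).a y ≠ 0 := by
    have := utop_a_mono (F := F) (z := z) (w := y) hwf hyz; omega
  have h2 := hwf y; have h3 := hwf z
  have h4 := hwf (y + F y (Y.c y)); have h5 := hwf (z + F z (Y.c z))
  apply UConf.ext'
  · intro w
    have h1 := hwf w
    simp only [utop_a_apply haz', utop_a_apply hay', utop_a_apply hay, utop_a_apply haz,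
      utop_u_apply hay, utop_u_apply haz, utop_c_apply hay, utop_c_apply haz, hcz, hcy]
    clear hcz hcy haz' hay' hwf
    split_ifs <;> first | rfl | omega
  · intro w
    have h1 := hwf w
    simp only [utop_u_apply haz', utop_u_apply hay', utop_a_apply hay, utop_a_apply haz,
      utop_u_apply hay, utop_u_apply haz, utop_c_apply hay, utop_c_apply haz, hcz, hcy]
    clear hcz hcy haz' hay' hwf
    split_ifs <;> first | rfl | omega
  · intro w
    simp only [utop_c_apply haz', utop_c_apply hay', utop_c_apply hay, utop_c_apply haz, hcz, hcy]
    clear hcz hcy haz' hay' hwf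
    split_ifs <;> first | rfl | omega


lemma exists_split_first {z : ℤ} {w : List ℤ} (h : z ∈ w) :
    ∃ w₁ w₂, w = w₁ ++ z :: w₂ ∧ z ∉ w₁ := by
  induction w with
  | nil => simp at h
  | cons b w ih =>
      by_cases hb : b = z
      · exact ⟨[], w, by simp [hb], by simp⟩
      · have hz : z ∈ w := by
          rcases List.mem_cons.mp h with h' | h'
          · exact absurd h'.symm hb
          · exact h'
        obtain ⟨w₁, w₂, rfl, hni⟩ := ih hz
        refine ⟨b :: w₁, w₂, rfl, ?_⟩
        intro hm
        rcases List.mem_cons.mp hm with h' | h'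
        · exact hb h'.symm
        · exact hni h'

lemma exchange {F : ℤ → ℕ → ℤ} {z : ℤ} {w₂ : List ℤ} :
    ∀ (w₁ : List ℤ) (Y : UConf), WF Y → Y.a z ≠ 0 → z ∉ w₁ →
    LegalW F (w₁ ++ z :: w₂) Y →
    LegalW F (z :: (w₁ ++ w₂)) Y ∧
      applyW F (w₁ ++ z :: w₂) Y = applyW F (z :: (w₁ ++ w₂)) Y := by
  intro w₁
  induction w₁ with
  | nil => intro Y hwf haz _ hleg; exact ⟨hleg, rfl⟩
  | cons y w₁ ih =>
      intro Y hwf haz hzm hleg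
      have hyz : y ≠ z := fun h => hzm (by simp [h])
      have hay : Y.a y ≠ 0 := hleg.1
      have hzw : z ∉ w₁ := fun h => hzm (by simp [h])
      obtain ⟨ihleg, iheq⟩ := ih (utop F y Y) (utop_wf hwf)
        (by have := utop_a_mono (F := F) (z := y) (w := z) hwf (Ne.symm hyz); omega)
        hzw hleg.2
      have hcomm := utop_comm (F := F) hwf hyz hay haz
      constructor
      · refine ⟨haz, ?_, ?_⟩
        · have := utop_a_mono (F := F) (z := z) (w := y) hwf hyz; omega
        · have : LegalW F (w₁ ++ w₂) (utop F z (utop F y Y)) := ihleg.2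
          rwa [hcomm] at this
      · show applyW F (w₁ ++ z :: w₂) (utop F y Y) = applyW F (w₁ ++ w₂) (utop F y (utop F z Y))
        rw [iheq]
        show applyW F (w₁ ++ w₂) (utop F z (utop F y Y)) = _
        rw [hcomm]

lemma lap {F : ℤ → ℕ → ℤ} :
    ∀ (v w : List ℤ) (Y : UConf), WF Y → LegalW F w Y →
      (∀ s, (applyW F w Y).a s = 0) → LegalW F v Y → ∀ s, v.count s ≤ w.count s := by
  intro v
  induction v with
  | nil => intro w Y _ _ _ _ s; simp
  | cons z v ih =>
      intro w Y hwf hlw hst hlv s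
      have haz : Y.a z ≠ 0 := hlv.1
      have hzw : z ∈ w := by
        by_contra hzw
        have := a_mono_applyW (F := F) (w := w) hwf hzw
        have := hst z; omega
      obtain ⟨w₁, w₂, rfl, hni⟩ := exists_split_first hzw
      obtain ⟨hleg', heq⟩ := exchange w₁ Y hwf haz hni hlw
      have hst' : ∀ s, (applyW F (w₁ ++ w₂) (utop F z Y)).a s = 0 := by
        intro s; have := hst s; rwa [heq] at this
      have := ih (w₁ ++ w₂) (utop F z Y) (utop_wf hwf) hleg'.2 hst' hlv.2 s
      rw [List.count_append] at this ⊢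
      rw [List.count_cons, List.count_cons] at *
      by_cases hsz : s = z <;> simp [hsz] at * <;> omega

open Finset

def proj {μ : ℕ} (X : ARWState μ) : UConf :=
  ⟨fun z => (Finset.univ.filter (fun n => X.pos n = z ∧ X.typ n = true)).card,
   fun z => (Finset.univ.filter (fun n => X.pos n = z)).card,
   X.cnt⟩

@[simp] lemma proj_a {μ : ℕ} (X : ARWState μ) (z : ℤ) :
    (proj X).a z = (Finset.univ.filter (fun n => X.pos n = z ∧ X.typ n = true)).card := rfl
@[simp] lemma proj_u {μ : ℕ} (X : ARWState μ) (z : ℤ) :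
    (proj X).u z = (Finset.univ.filter (fun n => X.pos n = z)).card := rfl
@[simp] lemma proj_c {μ : ℕ} (X : ARWState μ) (z : ℤ) :
    (proj X).c z = X.cnt z := rfl

lemma proj_wf {μ : ℕ} (X : ARWState μ) : WF (proj X) := by
  intro z
  rw [proj_a, proj_u]
  exact Finset.card_le_card (fun k hk => by
    simp only [mem_filter] at *; exact ⟨hk.1, hk.2.1⟩)

lemma proj_a_pos {μ : ℕ} {X : ARWState μ} {n : Fin μ} (h : X.typ n = true) :
    (proj X).a (X.pos n) ≠ 0 := by
  have : n ∈ Finset.univ.filter (fun k => X.pos k = X.pos n ∧ X.typ k = true) := by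
    simp [h]
  simp only [proj]
  exact Finset.card_ne_zero_of_mem this

lemma arwStep_passive {μ : ℕ} {F : ℤ → ℕ → ℤ} {n : Fin μ} {X : ARWState μ}
    (h : X.typ n = false) : arwStep F n X = X := by
  simp [arwStep, h]

lemma proj_step {μ : ℕ} {F : ℤ → ℕ → ℤ} {n : Fin μ} {X : ARWState μ}
    (h : X.typ n = true) :
    proj (arwStep F n X) = utop F (X.pos n) (proj X) := by
  have hnf : ¬ X.typ n = false := by simp [h]
  set z := X.pos n with hzdef
  have haz : (proj X).a z ≠ 0 := proj_a_pos h
  have hcz : (proj X).c z = X.cnt z := rfl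
  by_cases h0 : F z (X.cnt z) = 0
  · -- sleep step
    have h0' : F z ((proj X).c z) = 0 := h0
    rw [utop_sleep haz h0']
    have hstep : arwStep F n X =
        { pos := X.pos,
          typ := fun k => if k = n then (if ∃ l, l ≠ n ∧ X.pos l = z then true else false)
            else X.typ k,
          cnt := fun w => if w = z then X.cnt w + 1 else X.cnt w } := by
      rw [arwStep, if_neg hnf]
      simp only [← hzdef, h0]
      simp
    rw [hstep]
    by_cases hex : ∃ l, l ≠ n ∧ X.pos l = z
    · obtain ⟨l, hln, hlz⟩ := hex
      have hu2 : 1 < (Finset.univ.filter (fun k => X.pos k = z)).card := by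
        apply Finset.one_lt_card.mpr
        refine ⟨n, ?_, l, ?_, Ne.symm hln⟩
        · simp only [Finset.mem_filter, Finset.mem_univ, true_and]; rfl
        · simp only [Finset.mem_filter, Finset.mem_univ, true_and]; exact hlz
      apply UConf.ext'
      · intro w
        delta proj; dsimp only
        have hfc : (Finset.univ.filter (fun k => X.pos k = w ∧
            (if k = n then (if ∃ l, l ≠ n ∧ X.pos l = z then true else false) else X.typ k) = true))
            = Finset.univ.filter (fun k => X.pos k = w ∧ X.typ k = true) := by
          apply Finset.filter_congr
          intro k _
          have hex' : ∃ l', l' ≠ n ∧ X.pos l' = z := ⟨l, hln, hlz⟩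
          by_cases hk : k = n
          · rw [hk]; simp [h, hex']
          · simp [hk]
        rw [hfc]
        rw [if_neg]
        rintro ⟨rfl, hu1⟩
        omega
      · intro w; rfl
      · intro w
        show (if w = z then X.cnt w + 1 else X.cnt w) = _
        by_cases hwz : w = z <;> simp [hwz]
    · have hu1 : (Finset.univ.filter (fun k => X.pos k = z)).card = 1 := by
        have : Finset.univ.filter (fun k => X.pos k = z) = {n} := by
          apply Finset.ext; intro k
          simp only [mem_filter, mem_univ, true_and, mem_singleton]
          constructor
          · intro hk
            by_contra hkn
            exact hex ⟨k, hkn, hk⟩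
          · rintro rfl; rfl
        rw [this, Finset.card_singleton]
      have htyp2 : (fun k => if k = n then (if ∃ l, l ≠ n ∧ X.pos l = z then true else false)
          else X.typ k) = (fun k => if k = n then false else X.typ k) := by
        funext k
        by_cases hk : k = n <;> simp [hk, hex]
      rw [htyp2]
      apply UConf.ext'
      · intro w
        delta proj; dsimp only
        by_cases hwz : w = z
        · subst hwz
          have hcond : z = z ∧ (Finset.univ.filter (fun n => X.pos n = z)).card = 1 := ⟨rfl, hu1⟩
          rw [if_pos hcond, Finset.card_eq_zero]
          apply Finset.eq_empty_iff_forall_notMem.mpr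
          intro k hk
          simp only [mem_filter, mem_univ, true_and] at hk
          by_cases hkn : k = n
          · rw [hkn, if_pos rfl] at hk
            exact Bool.false_ne_true hk.2
          · exact hex ⟨k, hkn, hk.1⟩
        · rw [if_neg (by rintro ⟨rfl, _⟩; exact hwz rfl)]
          congr 1
          apply Finset.filter_congr
          intro k _
          by_cases hkn : k = n
          · rw [hkn]
            constructor
            · rintro ⟨hp, hb⟩; simp at hb
            · rintro ⟨hp, _⟩; exact absurd (show w = z by omega) hwz
          · simp [hkn]
      · intro w; rfl
      · intro w
        show (if w = z then X.cnt w + 1 else X.cnt w) = _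
        by_cases hwz : w = z <;> simp [hwz]
  · -- jump step
    have h1' : F z ((proj X).c z) ≠ 0 := h0
    rw [utop_jump haz h1']
    set t : ℤ := z + F z (X.cnt z) with htdef
    have htz : t ≠ z := by
      simp only [htdef]; intro hh; apply h0; omega
    have hstep : arwStep F n X =
        { pos := fun k => if k = n then t else X.pos k,
          typ := fun k => if (if k = n then t else X.pos k) = t then true else X.typ k,
          cnt := fun w => if w = z then X.cnt w + 1 else X.cnt w } := by
      rw [arwStep, if_neg hnf]
      simp only [← hzdef, if_neg h0]; rfl
    rw [hstep]
    have hposn : X.pos n = z := rfl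
    have hins : ∀ w, Finset.univ.filter (fun k => (if k = n then t else X.pos k) = w)
        = (if w = t then insert n (Finset.univ.filter (fun k => X.pos k = w))
           else if w = z then (Finset.univ.filter (fun k => X.pos k = w)).erase n
           else Finset.univ.filter (fun k => X.pos k = w)) := by
      intro w
      by_cases hwt : w = t
      · subst hwt
        rw [if_pos rfl]
        apply Finset.ext; intro k
        simp only [mem_filter, mem_univ, true_and, mem_insert]
        by_cases hkn : k = n
        · subst hkn; simp
        · simp [hkn]
      · rw [if_neg hwt]
        by_cases hwz : w = z
        · subst hwz
          rw [if_pos rfl]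
          apply Finset.ext; intro k
          simp only [mem_filter, mem_univ, true_and, Finset.mem_erase]
          by_cases hkn : k = n
          · rw [hkn]; simp [htz]
          · simp [hkn, And.comm]
        · rw [if_neg hwz]
          apply Finset.filter_congr
          intro k _
          by_cases hkn : k = n
          · rw [hkn]
            constructor
            · intro hh; rw [if_pos rfl] at hh; exact absurd hh.symm hwt
            · intro hh; exact absurd (show w = z by omega) hwz
          · simp [hkn]
    have hnm : n ∉ Finset.univ.filter (fun k => X.pos k = t) := by
      simp only [Finset.mem_filter, Finset.mem_univ, true_and, hposn]
      exact fun hh => htz hh.symm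
    apply UConf.ext'
    · -- active counts
      intro w
      delta proj; dsimp only
      by_cases hwt : w = t
      · subst hwt
        rw [if_pos rfl]
        have : Finset.univ.filter (fun k => (if k = n then t else X.pos k) = t ∧
            (if (if k = n then t else X.pos k) = t then true else X.typ k) = true)
            = Finset.univ.filter (fun k => (if k = n then t else X.pos k) = t) := by
          apply Finset.filter_congr
          intro k _
          constructor
          · exact fun hk => hk.1
          · intro hk; exact ⟨hk, by rw [if_pos hk]⟩
        rw [this, hins t, if_pos rfl, Finset.card_insert_of_notMem hnm]
      · rw [if_neg hwt]
        by_cases hwz : w = z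
        · subst hwz
          rw [if_pos rfl]
          have : Finset.univ.filter (fun k => (if k = n then t else X.pos k) = z ∧
              (if (if k = n then t else X.pos k) = t then true else X.typ k) = true)
              = (Finset.univ.filter (fun k => X.pos k = z ∧ X.typ k = true)).erase n := by
            apply Finset.ext; intro k
            simp only [mem_filter, mem_univ, true_and, Finset.mem_erase]
            by_cases hkn : k = n
            · subst hkn
              rw [if_pos rfl]
              constructor
              · rintro ⟨hh, _⟩; exact absurd hh htz
              · rintro ⟨hh, _⟩; exact absurd rfl hh
            · rw [if_neg hkn]
              constructor
              · rintro ⟨hp, ht'⟩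
                rw [if_neg (by rw [hp]; exact Ne.symm htz)] at ht'
                exact ⟨hkn, hp, ht'⟩
              · rintro ⟨_, hp, ht'⟩
                refine ⟨hp, ?_⟩
                rw [if_neg (by rw [hp]; exact Ne.symm htz)]
                exact ht'
          rw [this, Finset.card_erase_of_mem (by simp [hposn, h])]
        · rw [if_neg hwz]
          congr 1
          apply Finset.ext; intro k
          simp only [mem_filter, mem_univ, true_and]
          by_cases hkn : k = n
          · subst hkn
            rw [if_pos rfl]
            constructor
            · rintro ⟨hh, _⟩; exact (hwt (by omega)).elim
            · rintro ⟨hp, _⟩; exact (hwz (by omega)).elim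
          · rw [if_neg hkn]
            constructor
            · rintro ⟨hp, ht'⟩
              rw [if_neg (by rw [hp]; exact hwt)] at ht'
              exact ⟨hp, ht'⟩
            · rintro ⟨hp, ht'⟩
              refine ⟨hp, ?_⟩
              rw [if_neg (by rw [hp]; exact hwt)]
              exact ht'
    · -- total counts
      intro w
      delta proj; dsimp only
      rw [hins w]
      by_cases hwt : w = t
      · subst hwt
        rw [if_pos rfl, if_pos rfl, Finset.card_insert_of_notMem hnm]
      · rw [if_neg hwt, if_neg hwt]
        by_cases hwz : w = z
        · subst hwz
          rw [if_pos rfl, if_pos rfl, Finset.card_erase_of_mem (by simp [hposn])]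
        · rw [if_neg hwz, if_neg hwz]
    · -- counters
      intro w
      show (if w = z then X.cnt w + 1 else X.cnt w) = _
      by_cases hwz : w = z <;> simp [hwz]

open Finset

/-- A labeled evolution projects to a legal toppling word. -/
lemma evolve_word {μ : ℕ} (F : ℤ → ℕ → ℤ) (N : ℕ → Fin μ) (X : ARWState μ) (K : ℕ) :
    ∃ w : List ℤ, LegalW F w (proj X) ∧ applyW F w (proj X) = proj (arwEvolve F N X K) := by
  induction K with
  | zero => exact ⟨[], trivial, rfl⟩
  | succ K ih =>
      obtain ⟨w, hleg, heq⟩ := ih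
      by_cases ht : (arwEvolve F N X K).typ (N K) = true
      · refine ⟨w ++ [(arwEvolve F N X K).pos (N K)], ?_, ?_⟩
        · apply legalW_append hleg
          rw [heq]
          exact ⟨proj_a_pos ht, trivial⟩
        · rw [applyW_append, heq]
          show utop F _ _ = _
          rw [← proj_step ht]
          rfl
      · refine ⟨w, hleg, ?_⟩
        rw [heq]
        have : arwEvolve F N X (K + 1) = arwEvolve F N X K := by
          show arwStep F (N K) _ = _
          exact arwStep_passive (by simpa using ht)
        rw [this]

/-- Chewing through sleep instructions at a site with at least two particles. -/
lemma chew (F : ℤ → ℕ → ℤ) (z : ℤ) :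
    ∀ (r : ℕ) (Y : UConf), (2 ≤ Y.u z ∨ r = 0) → Y.a z ≠ 0 →
      (∀ i, Y.c z ≤ i → i < Y.c z + r → F z i = 0) →
      LegalW F (List.replicate r z) Y ∧
      applyW F (List.replicate r z) Y =
        ⟨Y.a, Y.u, fun w => if w = z then Y.c z + r else Y.c w⟩ := by
  intro r
  induction r with
  | zero =>
      intro Y _ _ _
      refine ⟨trivial, ?_⟩
      show Y = _
      apply UConf.ext' <;> intro w
      · rfl
      · rfl
      · show Y.c w = if w = z then Y.c z + 0 else Y.c w
        by_cases hw : w = z <;> simp [hw]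
  | succ r ih =>
      intro Y hu ha hs
      have hu2 : 2 ≤ Y.u z := by rcases hu with h | h; exact h; omega
      have h0 : F z (Y.c z) = 0 := hs _ le_rfl (by omega)
      have hY' : utop F z Y = ⟨Y.a, Y.u, fun w => if w = z then Y.c z + 1 else Y.c w⟩ := by
        rw [utop_sleep ha h0]
        apply UConf.ext' <;> intro w <;> simp only
        rw [if_neg]; rintro ⟨rfl, h1⟩; omega
      have hrec := ih (utop F z Y)
        (by rw [hY']; left; exact hu2)
        (by rw [hY']; exact ha)
        (by rw [hY']; dsimp only; rw [if_pos rfl]; intro i h1 h2; exact hs i (by omega) (by omega))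
      rw [List.replicate_succ]
      refine ⟨⟨ha, hrec.1⟩, ?_⟩
      show applyW F (List.replicate r z) (utop F z Y) = _
      rw [hrec.2, hY']
      apply UConf.ext' <;> intro w <;> simp only
      by_cases hw : w = z <;> simp [hw] <;> omega

open Finset

def ARWInv (F : ℤ → ℕ → ℤ) (φ : ℤ → ℕ → ℕ) (Q Y : UConf) : Prop :=
  (∀ z, Q.u z ≤ Y.u z) ∧
  (∀ z, Q.a z ≤ Y.a z) ∧
  (∀ z j, F z j ≠ 0 → (j < Y.c z ↔ φ z j < Q.c z)) ∧
  (∀ z, (∃ i, Y.c z ≤ i ∧ φ z i < Q.c z) → (Q.a z = 0 ∧ 1 ≤ Q.u z) ∨ 2 ≤ Y.u z)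

lemma inv_sleep {F F' : ℤ → ℕ → ℤ} {φ : ℤ → ℕ → ℕ}
    (hφval : ∀ z j, F' z (φ z j) = F z j)
    {Q Y : UConf} (hwfQ : WF Q) (hinv : ARWInv F φ Q Y) {z : ℤ}
    (haz : Q.a z ≠ 0) (h0 : F' z (Q.c z) = 0) :
    ARWInv F φ (utop F' z Q) Y := by
  obtain ⟨h1, h2, h3, h4⟩ := hinv
  rw [utop_sleep haz h0]
  refine ⟨h1, ?_, ?_, ?_⟩
  · intro s
    dsimp only
    have := h2 s
    split <;> omega
  · intro s j hFs
    dsimp only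
    by_cases hsz : s = z
    · subst hsz
      rw [if_pos rfl]
      have hne : φ s j ≠ Q.c s := by
        intro hh
        apply hFs
        rw [← hφval s j, hh, h0]
      have := h3 s j hFs
      omega
    · rw [if_neg hsz]
      exact h3 s j hFs
  · intro s
    dsimp only
    by_cases hsz : s = z
    · subst hsz
      rw [if_pos rfl]
      intro _
      by_cases hq : Q.u s = 1
      · left
        constructor
        · rw [if_pos ⟨rfl, hq⟩]
        · omega
      · right
        have := hwfQ s
        have := h1 s
        omega
    · rw [if_neg hsz]
      intro hex
      rcases h4 s hex with ⟨ha0, hu1⟩ | hYu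
      · left
        refine ⟨?_, hu1⟩
        rw [if_neg]
        · exact ha0
        · rintro ⟨rfl, _⟩; exact hsz rfl
      · right; exact hYu

lemma inv_jump {F F' : ℤ → ℕ → ℤ} {φ : ℤ → ℕ → ℕ}
    (hφmono : ∀ z, StrictMono (φ z))
    (hφval : ∀ z j, F' z (φ z j) = F z j)
    {Q Y : UConf} (hwfQ : WF Q) (hwfY : WF Y) (hinv : ARWInv F φ Q Y) {z : ℤ} {j₀ : ℕ}
    (haz : Q.a z ≠ 0) (hj₀ : φ z j₀ = Q.c z) (hj : F z j₀ ≠ 0) :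
    LegalW F (List.replicate (j₀ - Y.c z) z ++ [z]) Y ∧
    ARWInv F φ (utop F' z Q) (applyW F (List.replicate (j₀ - Y.c z) z ++ [z]) Y) := by
  obtain ⟨h1, h2, h3, h4⟩ := hinv
  have hcj : Y.c z ≤ j₀ := by
    have := h3 z j₀ hj
    omega
  have hsleep : ∀ i, Y.c z ≤ i → i < j₀ → F z i = 0 := by
    intro i hi1 hi2
    by_contra hne
    have hiff := h3 z i hne
    have hlt : φ z i < φ z j₀ := (hφmono z) hi2
    omega
  have hYa : Y.a z ≠ 0 := by have := h2 z; omega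
  have hu : 2 ≤ Y.u z ∨ j₀ - Y.c z = 0 := by
    by_cases heq : j₀ = Y.c z
    · right; omega
    · left
      have hlt : φ z (Y.c z) < φ z j₀ := (hφmono z) (by omega)
      rcases h4 z ⟨Y.c z, le_rfl, by omega⟩ with ⟨ha0, _⟩ | hYu
      · exact absurd ha0 haz
      · exact hYu
  obtain ⟨hlegchew, hchew⟩ := chew F z (j₀ - Y.c z) Y hu hYa
    (fun i hi1 hi2 => hsleep i hi1 (by omega))
  have hY₁a : (applyW F (List.replicate (j₀ - Y.c z) z) Y).a = Y.a := by rw [hchew]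
  have hY₁u : (applyW F (List.replicate (j₀ - Y.c z) z) Y).u = Y.u := by rw [hchew]
  have hY₁cz : (applyW F (List.replicate (j₀ - Y.c z) z) Y).c z = j₀ := by
    rw [hchew]; dsimp only; rw [if_pos rfl]; omega
  have hY₁cne : ∀ s, s ≠ z → (applyW F (List.replicate (j₀ - Y.c z) z) Y).c s = Y.c s := by
    intro s hs
    rw [hchew]; dsimp only; rw [if_neg hs]
  constructor
  · apply legalW_append hlegchew
    refine ⟨?_, trivial⟩
    rw [hY₁a]; exact hYa
  · rw [applyW_append]
    set Y₁ := applyW F (List.replicate (j₀ - Y.c z) z) Y with hY₁def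
    show ARWInv F φ (utop F' z Q) (applyW F [z] Y₁)
    have hY₁az : Y₁.a z ≠ 0 := by rw [hY₁a]; exact hYa
    have hFz : F z (Y₁.c z) ≠ 0 := by rw [hY₁cz]; exact hj
    have hQ0 : F' z (Q.c z) ≠ 0 := by rw [← hj₀, hφval]; exact hj
    have hsame : F z (Y₁.c z) = F' z (Q.c z) := by
      rw [hY₁cz, ← hj₀, hφval]
    show ARWInv F φ (utop F' z Q) (utop F z Y₁)
    rw [utop_jump haz hQ0, utop_jump hY₁az hFz, hsame]
    set d := F' z (Q.c z) with hd
    have hQu1 : 1 ≤ Q.u z := le_trans (by omega) (hwfQ z)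
    refine ⟨?_, ?_, ?_, ?_⟩
    · intro s
      dsimp only
      rw [hY₁u]
      have := h1 s
      have := h1 z
      split_ifs <;> omega
    · intro s
      dsimp only
      rw [hY₁u, hY₁a]
      have := h2 s
      have ha2 := h2 z
      have := h1 s
      split_ifs <;> omega
    · intro s j hFs
      dsimp only
      by_cases hsz : s = z
      · subst hsz
        rw [if_pos rfl, if_pos rfl, hY₁cz, ← hj₀]
        have hmle : φ s j ≤ φ s j₀ ↔ j ≤ j₀ := (hφmono s).le_iff_le
        omega
      · rw [if_neg hsz, if_neg hsz, hY₁cne s hsz]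
        exact h3 s j hFs
    · intro s
      dsimp only
      by_cases hsz : s = z
      · subst hsz
        rintro ⟨i, hi1, hi2⟩
        exfalso
        rw [if_pos rfl, hY₁cz] at hi1
        rw [if_pos rfl] at hi2
        have hlt : φ s j₀ < φ s i := (hφmono s) (by omega)
        omega
      · rw [if_neg hsz, if_neg hsz, hY₁cne s hsz]
        intro hex
        rcases h4 s hex with ⟨ha0, hu1⟩ | hYu
        · by_cases hst : s = z + d
          · right
            rw [hY₁u, if_pos hst]
            have := h1 s
            omega
          · left
            constructor
            · rw [if_neg hst, if_neg hsz]; exact ha0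
            · rw [if_neg hst, if_neg hsz]; exact hu1
        · right
          rw [hY₁u]
          split_ifs <;> omega

open Finset

lemma jumpCount_mono (F : ℤ → ℕ → ℤ) (z : ℤ) {c c' : ℕ} (h : c ≤ c') :
    jumpCount F z c ≤ jumpCount F z c' := by
  apply Finset.card_le_card
  apply Finset.filter_subset_filter
  exact Finset.range_subset_range.mpr h

lemma jumpCount_eq {F F' : ℤ → ℕ → ℤ} {φ : ℤ → ℕ → ℕ} {z : ℤ}
    (hφmono : StrictMono (φ z))
    (hφval : ∀ j, F' z (φ z j) = F z j)
    (hφsleep : ∀ i, (∀ j, φ z j ≠ i) → F' z i = 0)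
    {c c' : ℕ} (h3 : ∀ j, F z j ≠ 0 → (j < c ↔ φ z j < c')) :
    jumpCount F' z c' = jumpCount F z c := by
  unfold jumpCount
  symm
  apply Finset.card_bij (fun j _ => φ z j)
  · intro j hj
    simp only [mem_filter, mem_range] at hj ⊢
    refine ⟨(h3 j hj.2).mp hj.1, ?_⟩
    rw [hφval]; exact hj.2
  · intro j1 h1 j2 h2 heq
    exact hφmono.injective heq
  · intro i hi
    simp only [mem_filter, mem_range] at hi
    have : ¬ (∀ j, φ z j ≠ i) := fun hh => hi.2 (hφsleep i hh)
    push_neg at this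
    obtain ⟨j, hj⟩ := this
    have hFj : F z j ≠ 0 := by rw [← hφval, hj]; exact hi.2
    refine ⟨j, ?_, hj⟩
    simp only [mem_filter, mem_range]
    exact ⟨(h3 j hFj).mpr (by omega), hFj⟩

lemma count_le_of_all {v w : List ℤ} (h : ∀ s, v.count s ≤ w.count s) :
    v.length ≤ w.length := by
  have hle : (v : Multiset ℤ) ≤ (w : Multiset ℤ) := by
    rw [Multiset.le_iff_count]
    intro a
    simpa using h a
  simpa using Multiset.card_le_card hle

lemma mono_bdd_eventually_const (f : ℕ → ℕ) (B : ℕ)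
    (hmono : ∀ k, f k ≤ f (k + 1)) (hbdd : ∀ k, f k ≤ B) :
    ∃ K, ∀ k, K ≤ k → f k = f K := by
  have hmono' : Monotone f := monotone_nat_of_le_succ hmono
  have hne : (Set.range f).Nonempty := ⟨f 0, ⟨0, rfl⟩⟩
  have hbdd' : BddAbove (Set.range f) := ⟨B, by rintro x ⟨k, rfl⟩; exact hbdd k⟩
  obtain ⟨K, hK⟩ := Nat.sSup_mem hne hbdd'
  refine ⟨K, fun k hk => le_antisymm ?_ (hmono' hk)⟩
  rw [hK]
  exact le_csSup hbdd' ⟨k, rfl⟩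

lemma arwStep_sleep_pos {μ : ℕ} {F : ℤ → ℕ → ℤ} {n : Fin μ} {X : ARWState μ}
    (h : X.typ n = true) (h0 : F (X.pos n) (X.cnt (X.pos n)) = 0) :
    (arwStep F n X).pos = X.pos := by
  rw [arwStep, if_neg (by simp [h])]
  simp only [h0]
  simp

open Finset Classical

attribute [local instance] Classical.propDecidable

noncomputable def jinvF (φ : ℤ → ℕ → ℕ) (z : ℤ) (i : ℕ) : ℕ :=
  if h : ∃ j, φ z j = i then h.choose else 0

lemma jinvF_spec {F' : ℤ → ℕ → ℤ} {φ : ℤ → ℕ → ℕ}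
    (hφsleep : ∀ z i, (∀ j, φ z j ≠ i) → F' z i = 0)
    {z : ℤ} {i : ℕ} (h : F' z i ≠ 0) : φ z (jinvF φ z i) = i := by
  have hex : ∃ j, φ z j = i := by
    by_contra hh
    push_neg at hh
    exact h (hφsleep z i hh)
  rw [jinvF, dif_pos hex]
  exact hex.choose_spec

noncomputable def extW {m' : ℕ} (F' : ℤ → ℕ → ℤ) (φ : ℤ → ℕ → ℕ)
    (P : ARWState m') (n' : Fin m') (Y : UConf) : List ℤ :=
  if P.typ n' = true ∧ F' (P.pos n') (P.cnt (P.pos n')) ≠ 0 then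
    List.replicate (jinvF φ (P.pos n') (P.cnt (P.pos n')) - Y.c (P.pos n')) (P.pos n')
      ++ [P.pos n']
  else []

noncomputable def vSeq {m' : ℕ} (F F' : ℤ → ℕ → ℤ) (φ : ℤ → ℕ → ℕ)
    (N' : ℕ → Fin m') (X' : ARWState m') (Y₀ : UConf) : ℕ → List ℤ
  | 0 => []
  | k + 1 => vSeq F F' φ N' X' Y₀ k ++
      extW F' φ (arwEvolve F' N' X' k) (N' k)
        (applyW F (vSeq F F' φ N' X' Y₀ k) Y₀)

section MainInv

variable {m m' : ℕ} (F F' : ℤ → ℕ → ℤ) (φ : ℤ → ℕ → ℕ)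
  (N' : ℕ → Fin m') (X : ARWState m) (X' : ARWState m')

lemma vSeq_succ (k : ℕ) :
    vSeq F F' φ N' X' (proj X) (k + 1) = vSeq F F' φ N' X' (proj X) k ++
      extW F' φ (arwEvolve F' N' X' k) (N' k)
        (applyW F (vSeq F F' φ N' X' (proj X) k) (proj X)) := rfl

lemma main_inv
    (hφmono : ∀ z, StrictMono (φ z))
    (hφval : ∀ z j, F' z (φ z j) = F z j)
    (hφsleep : ∀ z i, (∀ j, φ z j ≠ i) → F' z i = 0)
    (hcnt : ∀ z, X.cnt z = 0) (hcnt' : ∀ z, X'.cnt z = 0)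
    (ι : Fin m' → Fin m) (hι : Function.Injective ι)
    (hpos : ∀ n, X'.pos n = X.pos (ι n))
    (htyp : ∀ n, X'.typ n = true → X.typ (ι n) = true) :
    ∀ k, LegalW F (vSeq F F' φ N' X' (proj X) k) (proj X) ∧
      ARWInv F φ (proj (arwEvolve F' N' X' k))
        (applyW F (vSeq F F' φ N' X' (proj X) k) (proj X)) := by
  intro k
  induction k with
  | zero =>
      refine ⟨trivial, ?_, ?_, ?_, ?_⟩
      · intro z
        simp only [applyW, proj_u, arwEvolve, vSeq]
        apply Finset.card_le_card_of_injOn ι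
        · intro n hn
          simp only [Finset.mem_coe, mem_filter, mem_univ, true_and] at hn ⊢
          rw [← hpos]; exact hn
        · intro a _ b _ hab; exact hι hab
      · intro z
        simp only [applyW, proj_a, arwEvolve, vSeq]
        apply Finset.card_le_card_of_injOn ι
        · intro n hn
          simp only [Finset.mem_coe, mem_filter, mem_univ, true_and] at hn ⊢
          exact ⟨by rw [← hpos]; exact hn.1, htyp n hn.2⟩
        · intro a _ b _ hab; exact hι hab
      · intro z j _
        show (j < (proj X).c z ↔ φ z j < (proj X').c z)
        simp only [proj_c, hcnt, hcnt']
        omega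
      · intro z
        rintro ⟨i, _, hi⟩
        show _ ∨ _
        exfalso
        have : (proj (arwEvolve F' N' X' 0)).c z = 0 := hcnt' z
        omega
  | succ k ih =>
      obtain ⟨hleg, hinv⟩ := ih
      set P := arwEvolve F' N' X' k with hP
      set Y := applyW F (vSeq F F' φ N' X' (proj X) k) (proj X) with hY
      rw [vSeq_succ]
      by_cases heff : P.typ (N' k) = true
      · have hQstep : proj (arwEvolve F' N' X' (k + 1)) = utop F' (P.pos (N' k)) (proj P) :=
          proj_step heff
        have haQ : (proj P).a (P.pos (N' k)) ≠ 0 := proj_a_pos heff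
        by_cases h0 : F' (P.pos (N' k)) (P.cnt (P.pos (N' k))) = 0
        · have hext : extW F' φ P (N' k) Y = [] := by
            rw [extW, if_neg]
            rintro ⟨_, hne⟩
            exact hne h0
          rw [hext, List.append_nil]
          refine ⟨hleg, ?_⟩
          rw [hQstep]
          exact inv_sleep hφval (proj_wf P) hinv haQ h0
        · set z := P.pos (N' k) with hz
          set j₀ := jinvF φ z (P.cnt z) with hj₀def
          have hj₀ : φ z j₀ = (proj P).c z := jinvF_spec hφsleep h0
          have hj : F z j₀ ≠ 0 := by
            rw [← hφval, hj₀]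
            exact h0
          have hext : extW F' φ P (N' k) Y =
              List.replicate (j₀ - Y.c z) z ++ [z] := by
            rw [extW, if_pos ⟨heff, h0⟩]
          obtain ⟨hlegext, hinvnew⟩ := inv_jump hφmono hφval (proj_wf P)
            (applyW_wf (proj_wf X)) hinv haQ hj₀ hj
          rw [hext]
          constructor
          · exact legalW_append hleg hlegext
          · rw [applyW_append, hQstep]
            exact hinvnew
      · have hPk : arwEvolve F' N' X' (k + 1) = P := by
          show arwStep F' (N' k) P = P
          apply arwStep_passive
          cases h : P.typ (N' k)
          · rfl
          · exact absurd h heff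
        have hext : extW F' φ P (N' k) Y = [] := by
          rw [extW, if_neg]
          rintro ⟨h1, _⟩
          exact heff h1
        rw [hext, List.append_nil, hPk]
        exact ⟨hleg, hinv⟩

end MainInv

open Finset

lemma bool_false_of_not_true {b : Bool} (h : ¬ b = true) : b = false := by
  cases b
  · rfl
  · exact absurd rfl h

lemma bool_true_of_not_false {b : Bool} (h : ¬ b = false) : b = true := by
  cases b
  · exact absurd rfl h
  · rfl

/-- **Monotonicity.** Suppose `(X', F') ⪯ (X, F)`: both initial states have all counters
zero; `X'` is obtained from `X` by deleting some particles (via an injection `ι` of the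
remaining labels) and changing the types of some remaining particles from B (active) to
A (passive), keeping their positions; and at every site `z`, `F'_{z,·}` is obtained from
`F_{z,·}` by inserting sleep instructions (via strictly increasing maps `φ z`). If for
some label sequence `N ∈ 𝒩_m` the evolution of `X` under `F` stabilizes, then for every
label sequence `N' ∈ 𝒩_{m'}` the evolution of `X'` under `F'` also stabilizes, and at
every site the number of jump instructions opened in the primed evolution is at most the
number of jump instructions opened in the unprimed evolution: `R'_z ≤ R_z`. -/
theorem arw_monotonicity {m m' : ℕ} (F F' : ℤ → ℕ → ℤ)
    (hF : ValidEnvelopes F) (hF' : ValidEnvelopes F')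
    (X : ARWState m) (X' : ARWState m')
    (hcnt : ∀ z, X.cnt z = 0) (hcnt' : ∀ z, X'.cnt z = 0)
    (ι : Fin m' → Fin m) (hι : Function.Injective ι)
    (hpos : ∀ n, X'.pos n = X.pos (ι n))
    (htyp : ∀ n, X'.typ n = true → X.typ (ι n) = true)
    (φ : ℤ → ℕ → ℕ) (hφmono : ∀ z, StrictMono (φ z))
    (hφval : ∀ z j, F' z (φ z j) = F z j)
    (hφsleep : ∀ z i, (∀ j, φ z j ≠ i) → F' z i = 0)
    (N : ℕ → Fin m) (hN : FairSeq N)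
    (Xf : ARWState m) (hstab : StabilizesAt F N X Xf)
    (N' : ℕ → Fin m') (hN' : FairSeq N') :
    ∃ Xf' : ARWState m', StabilizesAt F' N' X' Xf' ∧
      ∀ z, jumpCount F' z (Xf'.cnt z) ≤ jumpCount F z (Xf.cnt z) := by
  classical
  obtain ⟨⟨k₀, hk₀⟩, hXfpass⟩ := hstab
  have hXf : arwEvolve F N X k₀ = Xf := hk₀ k₀ le_rfl
  obtain ⟨w₀, hw₀leg, hw₀eq⟩ := evolve_word F N X k₀
  rw [hXf] at hw₀eq
  have hwfY₀ : WF (proj X) := proj_wf X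
  have hY₀c : ∀ s, (proj X).c s = 0 := fun s => hcnt s
  have hstable : ∀ s, (applyW F w₀ (proj X)).a s = 0 := by
    intro s
    rw [hw₀eq, proj_a, Finset.card_eq_zero]
    apply Finset.filter_eq_empty_iff.mpr
    intro n _
    rw [hXfpass n]
    simp
  have hw₀count : ∀ s, w₀.count s = Xf.cnt s := by
    intro s
    have h1 := count_applyW hw₀leg s
    rw [hw₀eq, proj_c, hY₀c] at h1
    omega
  have hmain := main_inv F F' φ N' X X' hφmono hφval hφsleep hcnt hcnt' ι hι hpos htyp
  have hcountv : ∀ k s, (vSeq F F' φ N' X' (proj X) k).count s ≤ w₀.count s := fun k s =>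
    lap (vSeq F F' φ N' X' (proj X) k) w₀ (proj X) hwfY₀ hw₀leg hstable (hmain k).1 s
  have hYc : ∀ k s, (applyW F (vSeq F F' φ N' X' (proj X) k) (proj X)).c s
      = (vSeq F F' φ N' X' (proj X) k).count s := by
    intro k s
    have h1 := count_applyW (hmain k).1 s
    rw [hY₀c] at h1
    omega
  have hlen : ∀ k, (vSeq F F' φ N' X' (proj X) k).length ≤ w₀.length :=
    fun k => count_le_of_all (hcountv k)
  have hlenmono : ∀ k, (vSeq F F' φ N' X' (proj X) k).length
      ≤ (vSeq F F' φ N' X' (proj X) (k + 1)).length := by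
    intro k
    rw [vSeq_succ, List.length_append]
    omega
  obtain ⟨K₁, hK₁⟩ := mono_bdd_eventually_const
    (fun k => (vSeq F F' φ N' X' (proj X) k).length) w₀.length hlenmono hlen
  have hvfrozen : ∀ k, K₁ ≤ k → vSeq F F' φ N' X' (proj X) k = vSeq F F' φ N' X' (proj X) K₁ := by
    intro k hk
    induction k, hk using Nat.le_induction with
    | base => rfl
    | succ k hk ih =>
        rw [vSeq_succ]
        have h1 := hK₁ (k + 1) (by omega)
        have h2 := hK₁ k hk
        rw [vSeq_succ, List.length_append] at h1
        have : (extW F' φ (arwEvolve F' N' X' k) (N' k)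
            (applyW F (vSeq F F' φ N' X' (proj X) k) (proj X))).length = 0 := by omega
        rw [List.length_eq_zero_iff] at this
        rw [this, List.append_nil, ih]
  have hextnil : ∀ k, K₁ ≤ k → extW F' φ (arwEvolve F' N' X' k) (N' k)
      (applyW F (vSeq F F' φ N' X' (proj X) k) (proj X)) = [] := by
    intro k hk
    rw [hvfrozen k hk]
    have h1 : vSeq F F' φ N' X' (proj X) (k + 1)
        = vSeq F F' φ N' X' (proj X) k ++ extW F' φ (arwEvolve F' N' X' k) (N' k)
          (applyW F (vSeq F F' φ N' X' (proj X) k) (proj X)) := vSeq_succ F F' φ N' X X' k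
    rw [hvfrozen (k + 1) (by omega), hvfrozen k hk] at h1
    have h2 := congrArg List.length h1
    rw [List.length_append] at h2
    have hz : (extW F' φ (arwEvolve F' N' X' k) (N' k)
        (applyW F (vSeq F F' φ N' X' (proj X) K₁) (proj X))).length = 0 := by omega
    rwa [List.length_eq_zero_iff] at hz
  by_cases hfin : ∃ K, ∀ k, K ≤ k → ¬ (arwEvolve F' N' X' k).typ (N' k) = true
  · obtain ⟨K₂, hK₂⟩ := hfin
    have hconst : ∀ k, K₂ ≤ k → arwEvolve F' N' X' k = arwEvolve F' N' X' K₂ := by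
      intro k hk
      induction k, hk using Nat.le_induction with
      | base => rfl
      | succ k hk ih =>
          have hfalse : (arwEvolve F' N' X' k).typ (N' k) = false :=
            bool_false_of_not_true (hK₂ k hk)
          show arwStep F' (N' k) (arwEvolve F' N' X' k) = _
          rw [arwStep_passive hfalse, ih]
    refine ⟨arwEvolve F' N' X' K₂, ⟨⟨K₂, fun k hk => hconst k hk⟩, ?_⟩, ?_⟩
    · intro n
      by_contra hb
      have hbt : (arwEvolve F' N' X' K₂).typ n = true := bool_true_of_not_false hb
      obtain ⟨k', hk'1, hk'2⟩ := hN' n K₂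
      apply hK₂ k' hk'1
      rw [hconst k' hk'1, hk'2]
      exact hbt
    · intro s
      obtain ⟨h1, h2, h3, h4⟩ := (hmain K₂).2
      have heq : jumpCount F' s ((arwEvolve F' N' X' K₂).cnt s)
          = jumpCount F s ((applyW F (vSeq F F' φ N' X' (proj X) K₂) (proj X)).c s) :=
        jumpCount_eq (hφmono s) (fun j => hφval s j) (fun i => hφsleep s i)
          (fun j hF0 => h3 s j hF0)
      rw [heq]
      apply jumpCount_mono
      rw [hYc]
      rw [← hw₀count]
      exact hcountv K₂ s
  · exfalso
    push_neg at hfin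
    have hsleepk : ∀ k, K₁ ≤ k → (arwEvolve F' N' X' k).typ (N' k) = true →
        F' ((arwEvolve F' N' X' k).pos (N' k))
          ((arwEvolve F' N' X' k).cnt ((arwEvolve F' N' X' k).pos (N' k))) = 0 := by
      intro k hk ht
      by_contra h0
      have hnil := hextnil k hk
      rw [extW, if_pos ⟨ht, h0⟩] at hnil
      simp at hnil
    have hposfr : ∀ k, K₁ ≤ k → (arwEvolve F' N' X' k).pos = (arwEvolve F' N' X' K₁).pos := by
      intro k hk
      induction k, hk using Nat.le_induction with
      | base => rfl
      | succ k hk ih =>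
          by_cases ht : (arwEvolve F' N' X' k).typ (N' k) = true
          · show (arwStep F' (N' k) (arwEvolve F' N' X' k)).pos = _
            rw [arwStep_sleep_pos ht (hsleepk k hk ht), ih]
          · show (arwStep F' (N' k) (arwEvolve F' N' X' k)).pos = _
            rw [arwStep_passive (bool_false_of_not_true ht), ih]
    have hpig : ∃ z, ∀ K, ∃ k, K ≤ k ∧ K₁ ≤ k ∧ (arwEvolve F' N' X' k).typ (N' k) = true ∧
        (arwEvolve F' N' X' k).pos (N' k) = z := by
      by_contra hno
      push_neg at hno
      choose f hf using hno
      obtain ⟨k, hk1, hk2⟩ := hfin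
        (max ((Finset.image (arwEvolve F' N' X' K₁).pos Finset.univ).sup f) K₁)
      have hkK₁ : K₁ ≤ k := le_trans (le_max_right _ _) hk1
      have hzS : (arwEvolve F' N' X' k).pos (N' k)
          ∈ Finset.image (arwEvolve F' N' X' K₁).pos Finset.univ := by
        rw [hposfr k hkK₁]
        exact mem_image_of_mem _ (mem_univ _)
      have hfz : f ((arwEvolve F' N' X' k).pos (N' k)) ≤ k :=
        le_trans (le_trans (Finset.le_sup hzS) (le_max_left _ _)) hk1
      exact hf _ k hfz hkK₁ hk2 rfl
    obtain ⟨z, hzinf⟩ := hpig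
    have hcntmono : ∀ k, (arwEvolve F' N' X' k).cnt z ≤ (arwEvolve F' N' X' (k + 1)).cnt z := by
      intro k
      by_cases ht : (arwEvolve F' N' X' k).typ (N' k) = true
      · have hQs : proj (arwEvolve F' N' X' (k + 1))
            = utop F' ((arwEvolve F' N' X' k).pos (N' k)) (proj (arwEvolve F' N' X' k)) :=
          proj_step ht
        have hc : (arwEvolve F' N' X' (k + 1)).cnt z
            = (utop F' ((arwEvolve F' N' X' k).pos (N' k)) (proj (arwEvolve F' N' X' k))).c z := by
          rw [← hQs]; rfl
        rw [hc, utop_c_apply (proj_a_pos ht)]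
        split_ifs with h5
        · rw [← h5, proj_c]; omega
        · rw [proj_c]
      · show (arwEvolve F' N' X' k).cnt z ≤ (arwStep F' (N' k) (arwEvolve F' N' X' k)).cnt z
        rw [arwStep_passive (bool_false_of_not_true ht)]
    have hcntmono' : ∀ k k', k ≤ k' → (arwEvolve F' N' X' k).cnt z
        ≤ (arwEvolve F' N' X' k').cnt z :=
      fun k k' h => monotone_nat_of_le_succ hcntmono h
    have hcnteff : ∀ k, (arwEvolve F' N' X' k).typ (N' k) = true →
        (arwEvolve F' N' X' k).pos (N' k) = z →
        (arwEvolve F' N' X' (k + 1)).cnt z = (arwEvolve F' N' X' k).cnt z + 1 := by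
      intro k ht hz'
      have hQs : proj (arwEvolve F' N' X' (k + 1))
          = utop F' ((arwEvolve F' N' X' k).pos (N' k)) (proj (arwEvolve F' N' X' k)) :=
        proj_step ht
      have hc : (arwEvolve F' N' X' (k + 1)).cnt z
          = (utop F' ((arwEvolve F' N' X' k).pos (N' k)) (proj (arwEvolve F' N' X' k))).c z := by
        rw [← hQs]; rfl
      rw [hc, utop_c_apply (proj_a_pos ht), if_pos hz'.symm, proj_c, hz']
    have hunb : ∀ B, ∃ k, K₁ ≤ k ∧ B ≤ (arwEvolve F' N' X' k).cnt z := by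
      intro B
      induction B with
      | zero => exact ⟨K₁, le_rfl, Nat.zero_le _⟩
      | succ B ih =>
          obtain ⟨k, hk1, hk2⟩ := ih
          obtain ⟨k', h1', h2', h3', h4'⟩ := hzinf k
          refine ⟨k' + 1, by omega, ?_⟩
          have hmono2 := hcntmono' k k' h1'
          rw [hcnteff k' h3' h4']
          omega
    by_cases hjump : ∃ j, (applyW F (vSeq F F' φ N' X' (proj X) K₁) (proj X)).c z ≤ j ∧ F z j ≠ 0
    · obtain ⟨j₁, hj₁c, hj₁⟩ := hjump
      obtain ⟨k, hk1, hk2⟩ := hunb (φ z j₁ + 1)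
      obtain ⟨_, _, h3, _⟩ := (hmain k).2
      have hiff := h3 z j₁ hj₁
      rw [hvfrozen k hk1] at hiff
      have hQ : (proj (arwEvolve F' N' X' k)).c z = (arwEvolve F' N' X' k).cnt z := rfl
      omega
    · push_neg at hjump
      have hufr : ∀ k, K₁ ≤ k → (proj (arwEvolve F' N' X' k)).u z
          = (proj (arwEvolve F' N' X' K₁)).u z := by
        intro k hk
        rw [proj_u, proj_u, hposfr k hk]
      obtain ⟨k₃, _, hk₃K₁, hk₃eff, hk₃z⟩ := hzinf K₁
      have ha1 : (proj (arwEvolve F' N' X' k₃)).a z ≠ 0 := by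
        rw [← hk₃z]; exact proj_a_pos hk₃eff
      have hu2 : 2 ≤ (proj (arwEvolve F' N' X' k₃)).u z := by
        by_contra hlt
        have hWF := proj_wf (arwEvolve F' N' X' k₃) z
        have hu1 : (proj (arwEvolve F' N' X' k₃)).u z = 1 := by omega
        have h0 := hsleepk k₃ hk₃K₁ hk₃eff
        have hQs : proj (arwEvolve F' N' X' (k₃ + 1))
            = utop F' z (proj (arwEvolve F' N' X' k₃)) := by
          rw [← hk₃z]; exact proj_step hk₃eff
        have haz0 : (proj (arwEvolve F' N' X' (k₃ + 1))).a z = 0 := by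
          rw [hQs, utop_sleep ha1 (by rw [hk₃z] at h0; exact h0)]
          dsimp only
          rw [if_pos ⟨rfl, hu1⟩]
        have hstay : ∀ k, k₃ + 1 ≤ k → (proj (arwEvolve F' N' X' k)).a z = 0 := by
          intro k hk
          induction k, hk using Nat.le_induction with
          | base => exact haz0
          | succ k hk ih =>
              by_cases ht : (arwEvolve F' N' X' k).typ (N' k) = true
              · have hQs' : proj (arwEvolve F' N' X' (k + 1))
                    = utop F' ((arwEvolve F' N' X' k).pos (N' k))
                      (proj (arwEvolve F' N' X' k)) := proj_step ht
                have hne : (arwEvolve F' N' X' k).pos (N' k) ≠ z := by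
                  intro hh
                  have hap := proj_a_pos ht
                  rw [hh] at hap
                  exact hap ih
                rw [hQs', utop_sleep (proj_a_pos ht) (hsleepk k (by omega) ht)]
                dsimp only
                rw [if_neg (by rintro ⟨h5, _⟩; exact hne h5.symm)]
                exact ih
              · have : arwEvolve F' N' X' (k + 1) = arwEvolve F' N' X' k := by
                  show arwStep F' (N' k) (arwEvolve F' N' X' k) = _
                  exact arwStep_passive (bool_false_of_not_true ht)
                rw [this]
                exact ih
        obtain ⟨k₄, hk₄a, hk₄K₁', hk₄eff, hk₄z⟩ := hzinf (k₃ + 1)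
        have hap := proj_a_pos hk₄eff
        rw [hk₄z] at hap
        exact hap (hstay k₄ (by omega))
      obtain ⟨h1, h2, _, _⟩ := (hmain k₃).2
      have hYu2 : 2 ≤ (applyW F (vSeq F F' φ N' X' (proj X) k₃) (proj X)).u z :=
        le_trans hu2 (h1 z)
      have hYa1 : (applyW F (vSeq F F' φ N' X' (proj X) k₃) (proj X)).a z ≠ 0 := by
        have := h2 z; omega
      rw [hvfrozen k₃ hk₃K₁] at hYu2 hYa1
      obtain ⟨hlegext, _⟩ := chew F z (w₀.length + 1)
        (applyW F (vSeq F F' φ N' X' (proj X) K₁) (proj X)) (Or.inl hYu2) hYa1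
        (fun i hi1 _ => hjump i hi1)
      have hlegall : LegalW F (vSeq F F' φ N' X' (proj X) K₁
          ++ List.replicate (w₀.length + 1) z) (proj X) :=
        legalW_append (hmain K₁).1 hlegext
      have hcountall := lap _ w₀ (proj X) hwfY₀ hw₀leg hstable hlegall z
      rw [List.count_append] at hcountall
      have hrep : (List.replicate (w₀.length + 1) z).count z = w₀.length + 1 := by
        simp
      have hwlen : w₀.count z ≤ w₀.length := List.count_le_length
      omega
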